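/- arXiv:1909.00942 — 6 statements merged into one kernel-verified Lean document; each statement's English description precedes it below -/
import Mathlib

section
/- Let d ≥ 1, let ρ : ℝ → Matrix (Fin d) (Fin d) ℂ be a family of density matrices with entries differentiable at θ₀ and derivative ρ', and let D be a Hermitian matrix satisfying ρ' = (ρ(θ₀)·D + D·ρ(θ₀))/2. Let (φ_x)_{x ∈ Fin d} be an orthonormal eigenbasis of D with real eigenvalues (λ_x), and let Π x := φ_x φ_x† be the corresponding rank-one projections. With p x θ := Re Tr(ρ θ · Π x), one has (d/dθ p x)(θ₀) = λ_x · p x θ₀ for every x, and consequently the classical Fisher information of this measurement equals the quantum Fisher information: Σ_{x : p x θ₀ > 0} ( (d/dθ p x)(θ₀) )² / p x θ₀ = Re Tr( ρ(θ₀) · D · D ). -/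
open Matrix
open scoped ComplexOrder

/-- Projective measurement in the eigenbasis of the symmetric logarithmic
derivative saturates the quantum Cramér–Rao bound: with `Π_x = φ_x φ_x†` the
rank-one projections onto an orthonormal eigenbasis of `D`, the outcome
probabilities satisfy `p'_x(θ₀) = λ_x p_x(θ₀)` and the classical Fisher
information equals the quantum Fisher information `Tr(ρ(θ₀) D²)`. -/
theorem sld_eigenbasis_measurement_saturates_qcrb
    {d : ℕ} (hd : 1 ≤ d) (θ₀ : ℝ)
    (ρ : ℝ → Matrix (Fin d) (Fin d) ℂ)
    (hρ : ∀ θ, (ρ θ).PosSemidef ∧ (ρ θ).trace = 1)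
    (ρ' : Matrix (Fin d) (Fin d) ℂ)
    (hderiv : ∀ i j, HasDerivAt (fun θ => ρ θ i j) (ρ' i j) θ₀)
    (D : Matrix (Fin d) (Fin d) ℂ) (hD : D.IsHermitian)
    (hSLD : ρ' = (1 / 2 : ℂ) • (ρ θ₀ * D + D * ρ θ₀))
    (φ : Fin d → Fin d → ℂ) (lam : Fin d → ℝ)
    (horth : ∀ x y, star (φ x) ⬝ᵥ φ y = if x = y then 1 else 0)
    (heig : ∀ x, D *ᵥ φ x = (lam x : ℂ) • φ x) :
    (∀ x, deriv (fun θ => ((ρ θ * vecMulVec (φ x) (star (φ x))).trace).re) θ₀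
        = lam x * ((ρ θ₀ * vecMulVec (φ x) (star (φ x))).trace).re) ∧
    ∑ x ∈ Finset.univ.filter
        (fun x => 0 < ((ρ θ₀ * vecMulVec (φ x) (star (φ x))).trace).re),
        (deriv (fun θ => ((ρ θ * vecMulVec (φ x) (star (φ x))).trace).re) θ₀) ^ 2
          / ((ρ θ₀ * vecMulVec (φ x) (star (φ x))).trace).re
      = ((ρ θ₀ * D * D).trace).re := by
  -- Notation
  set P : Fin d → Matrix (Fin d) (Fin d) ℂ :=
    fun x => vecMulVec (φ x) (star (φ x)) with hPdefX
  -- `D * P x = λ x • P x`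
  have hP : ∀ x, D * P x = (lam x : ℂ) • P x := by
    intro x
    ext i j
    have h := congrFun (heig x) i
    simp only [mulVec, dotProduct, Pi.smul_apply, smul_eq_mul] at h
    simp only [hPdefX, mul_apply, vecMulVec_apply, Matrix.smul_apply, smul_eq_mul, Pi.star_apply]
    calc ∑ k, D i k * (φ x k * star (φ x j)) = (∑ k, D i k * φ x k) * star (φ x j) := by
          rw [Finset.sum_mul]; exact Finset.sum_congr rfl fun k _ => by ring
      _ = (lam x : ℂ) * (φ x i * star (φ x j)) := by rw [h]; ring
  -- `P x` is Hermitian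
  have hPH : ∀ x, (P x)ᴴ = P x := by
    intro x; ext i j
    simp [hPdefX, conjTranspose_apply, vecMulVec_apply, mul_comm]
  -- `P x * D = λ x • P x`
  have hP' : ∀ x, P x * D = (lam x : ℂ) • P x := by
    intro x
    have h1 := congrArg conjTranspose (hP x)
    rw [conjTranspose_mul, hPH x, hD.eq, conjTranspose_smul, hPH x] at h1
    simpa using h1
  -- completeness: `∑ x, P x = 1`
  have hsum : ∑ x, P x = (1 : Matrix (Fin d) (Fin d) ℂ) := by
    set U : Matrix (Fin d) (Fin d) ℂ := Matrix.of fun i x => φ x i with hUdef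
    have hU : Uᴴ * U = 1 := by
      ext x y
      simpa [hUdef, mul_apply, conjTranspose_apply, dotProduct, one_apply] using horth x y
    have hU2 : U * Uᴴ = 1 := mul_eq_one_comm.mp hU
    ext i j
    have := congrFun (congrFun hU2 i) j
    simp only [hUdef, mul_apply, conjTranspose_apply, Matrix.of_apply] at this
    simpa [hPdefX, Matrix.sum_apply, vecMulVec_apply] using this
  -- trace of `A * P x` as a quadratic form
  have htrace_dot : ∀ (A : Matrix (Fin d) (Fin d) ℂ) (x : Fin d),
      (A * P x).trace = star (φ x) ⬝ᵥ (A *ᵥ φ x) := by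
    intro A x
    simp only [hPdefX, Matrix.trace, Matrix.diag, mul_apply, vecMulVec_apply, dotProduct,
      mulVec, Pi.star_apply, Finset.mul_sum]
    exact Finset.sum_congr rfl fun i _ => Finset.sum_congr rfl fun j _ => by ring
  -- nonnegativity of p x
  have hnonneg : ∀ x, 0 ≤ ((ρ θ₀ * P x).trace).re := by
    intro x
    have h := (hρ θ₀).1.dotProduct_mulVec_nonneg (φ x)
    rw [← htrace_dot (ρ θ₀) x] at h
    rw [Complex.le_def] at h
    simpa using h.1
  -- derivative of the complex trace
  have hKey : ∀ (M : Matrix (Fin d) (Fin d) ℂ),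
      HasDerivAt (fun θ => (ρ θ * M).trace) ((ρ' * M).trace) θ₀ := by
    intro M
    have h : HasDerivAt (fun θ => ∑ i, ∑ j, ρ θ i j * M j i)
        (∑ i, ∑ j, ρ' i j * M j i) θ₀ :=
      HasDerivAt.fun_sum (fun i _ => HasDerivAt.fun_sum (fun j _ => (hderiv i j).mul_const (M j i)))
    have he : (fun θ => (ρ θ * M).trace) = fun θ => ∑ i, ∑ j, ρ θ i j * M j i := by
      funext θ; simp [Matrix.trace, Matrix.diag, mul_apply]
    have he' : (ρ' * M).trace = ∑ i, ∑ j, ρ' i j * M j i := by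
      simp [Matrix.trace, Matrix.diag, mul_apply]
    rw [he, he']
    exact h
  -- value of ρ' * P x trace
  have htr' : ∀ x, (ρ' * P x).trace = (lam x : ℂ) * (ρ θ₀ * P x).trace := by
    intro x
    rw [hSLD]
    rw [smul_mul_assoc, trace_smul, add_mul, trace_add]
    have h1 : (ρ θ₀ * D * P x).trace = (lam x : ℂ) * (ρ θ₀ * P x).trace := by
      rw [mul_assoc, hP x, mul_smul_comm, trace_smul, smul_eq_mul]
    have h2 : (D * ρ θ₀ * P x).trace = (lam x : ℂ) * (ρ θ₀ * P x).trace := by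
      rw [trace_mul_cycle, hP' x, smul_mul_assoc, trace_smul, trace_mul_comm, smul_eq_mul]
    rw [h1, h2, smul_eq_mul]
    ring
  -- the real derivative
  have hre : ∀ x, HasDerivAt (fun θ => ((ρ θ * P x).trace).re)
      (lam x * ((ρ θ₀ * P x).trace).re) θ₀ := by
    intro x
    have h := (Complex.reCLM.hasFDerivAt.comp_hasDerivAt θ₀ (hKey (P x)))
    have : ((ρ' * P x).trace).re = lam x * ((ρ θ₀ * P x).trace).re := by
      rw [htr' x]
      simp [Complex.mul_re]
    simpa [this, Function.comp_def] using h
  have hderiv_eq : ∀ x, deriv (fun θ => ((ρ θ * P x).trace).re) θ₀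
      = lam x * ((ρ θ₀ * P x).trace).re := fun x => (hre x).deriv
  refine ⟨hderiv_eq, ?_⟩
  -- Fisher information computation
  have hRHS : ((ρ θ₀ * D * D).trace).re
      = ∑ x, (lam x)^2 * ((ρ θ₀ * P x).trace).re := by
    have h1 : ρ θ₀ * D * D = ∑ x, ((lam x : ℂ)^2) • (ρ θ₀ * P x) := by
      calc ρ θ₀ * D * D = ρ θ₀ * D * D * 1 := by rw [mul_one]
        _ = ρ θ₀ * D * D * ∑ x, P x := by rw [hsum]
        _ = ∑ x, ρ θ₀ * D * D * P x := by rw [Finset.mul_sum]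
        _ = ∑ x, ((lam x : ℂ)^2) • (ρ θ₀ * P x) := by
            refine Finset.sum_congr rfl fun x _ => ?_
            rw [mul_assoc (ρ θ₀ * D), hP x, mul_smul_comm, mul_assoc, hP x,
              mul_smul_comm, smul_smul]
            push_cast
            ring_nf
    rw [h1, trace_sum]
    rw [Complex.re_sum]
    refine Finset.sum_congr rfl fun x _ => ?_
    rw [trace_smul, smul_eq_mul, Complex.mul_re]
    have e1 : ((lam x : ℂ)^2).re = lam x ^ 2 := by
      rw [← Complex.ofReal_pow]; exact Complex.ofReal_re _
    have e2 : ((lam x : ℂ)^2).im = 0 := by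
      rw [← Complex.ofReal_pow]; exact Complex.ofReal_im _
    rw [e1, e2]
    ring
  rw [hRHS]
  rw [Finset.sum_filter]
  refine Finset.sum_congr rfl fun x _ => ?_
  by_cases hx : 0 < ((ρ θ₀ * P x).trace).re
  · rw [if_pos hx, hderiv_eq x]
    simp only [hPdefX] at hx ⊢
    field_simp
  · rw [if_neg hx]
    have h0 : ((ρ θ₀ * P x).trace).re = 0 := le_antisymm (not_lt.mp hx) (hnonneg x)
    rw [h0]; ring
end

section
/- Let d ≥ 1, let ρ be a positive definite d×d complex density matrix with orthonormal eigenbasis (v_i)_{i ∈ Fin d} and eigenvalues (p_i) (so all p_i > 0 and Σ p_i = 1), and let G be a Hermitian d×d matrix. Define the matrix D := 2i · Σ_{i,j} ((p_i − p_j)/(p_i + p_j)) · ⟨v_i, G v_j⟩ · v_i v_j†. Then: (a) D is Hermitian; (b) D solves the symmetric logarithmic derivative equation for the unitary family, i.e. −i(Gρ − ρG) = (ρD + Dρ)/2; and (c) the quantum Fisher information equals Re Tr(ρ·D·D) = 2 Σ_{i,j} ((p_i − p_j)²/(p_i + p_j)) · |⟨v_i, G v_j⟩|². -/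
open Matrix
open scoped ComplexOrder

namespace SLDAux

variable {d : ℕ}

lemma vv_mul_vv (a b c e : Fin d → ℂ) :
    vecMulVec a b * vecMulVec c e = (b ⬝ᵥ c) • vecMulVec a e := by
  ext i j
  simp only [Matrix.mul_apply, vecMulVec_apply, Matrix.smul_apply, dotProduct, smul_eq_mul]
  rw [Finset.sum_mul]
  exact Finset.sum_congr rfl fun k _ => by ring

lemma mul_vv (M : Matrix (Fin d) (Fin d) ℂ) (a b : Fin d → ℂ) :
    M * vecMulVec a b = vecMulVec (M *ᵥ a) b := by
  ext i j
  simp only [Matrix.mul_apply, vecMulVec_apply, mulVec, dotProduct]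
  rw [Finset.sum_mul]
  exact Finset.sum_congr rfl fun k _ => by ring

lemma vv_mul (M : Matrix (Fin d) (Fin d) ℂ) (a b : Fin d → ℂ) :
    vecMulVec a b * M = vecMulVec a (b ᵥ* M) := by
  ext i j
  simp only [Matrix.mul_apply, vecMulVec_apply, vecMul, dotProduct]
  rw [Finset.mul_sum]
  exact Finset.sum_congr rfl fun k _ => by ring

lemma smul_vv (c : ℂ) (a b : Fin d → ℂ) :
    vecMulVec (c • a) b = c • vecMulVec a b := by
  ext i j
  simp [vecMulVec_apply, mul_assoc]

lemma vv_smul (c : ℂ) (a b : Fin d → ℂ) :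
    vecMulVec a (c • b) = c • vecMulVec a b := by
  ext i j
  simp [vecMulVec_apply]
  ring

lemma trace_vv (a b : Fin d → ℂ) : (vecMulVec a b).trace = b ⬝ᵥ a := by
  simp [Matrix.trace, Matrix.diag, vecMulVec_apply, dotProduct, mul_comm]

lemma conjTranspose_vv (a b : Fin d → ℂ) :
    (vecMulVec a b)ᴴ = vecMulVec (star b) (star a) := by
  ext i j
  simp [Matrix.conjTranspose_apply, vecMulVec_apply, mul_comm]

lemma complete (v : Fin d → Fin d → ℂ)
    (horth : ∀ i j, star (v i) ⬝ᵥ v j = if i = j then 1 else 0) :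
    ∑ i, vecMulVec (v i) (star (v i)) = 1 := by
  set V : Matrix (Fin d) (Fin d) ℂ := Matrix.of fun k i => v i k with hV
  have h1 : Vᴴ * V = 1 := by
    ext i j
    simpa [Matrix.mul_apply, Matrix.conjTranspose_apply, hV, dotProduct,
      Matrix.one_apply] using horth i j
  have h2 : V * Vᴴ = 1 := mul_eq_one_comm.mp h1
  calc ∑ i, vecMulVec (v i) (star (v i)) = V * Vᴴ := by
        ext k l
        simp [Matrix.mul_apply, Matrix.conjTranspose_apply, hV, vecMulVec_apply,
          Matrix.sum_apply]
    _ = 1 := h2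

end SLDAux

/-- For a positive definite density matrix `ρ` with orthonormal eigenbasis `v`
and eigenvalues `p`, and a Hermitian generator `G`, the matrix
`D = 2i Σ_{ij} ((p_i - p_j)/(p_i + p_j)) ⟨v_i, G v_j⟩ |v_i⟩⟨v_j|` is Hermitian,
solves the symmetric logarithmic derivative equation for the unitary family
`exp(-iθG) ρ exp(iθG)`, and the quantum Fisher information equals
`2 Σ_{ij} ((p_i - p_j)²/(p_i + p_j)) |⟨v_i, G v_j⟩|²`. -/
theorem sld_and_qfi_of_unitary_family
    {d : ℕ} (hd : 1 ≤ d)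
    (ρ G : Matrix (Fin d) (Fin d) ℂ) (hρ : ρ.PosDef) (htr : ρ.trace = 1)
    (hG : G.IsHermitian)
    (v : Fin d → Fin d → ℂ) (p : Fin d → ℝ)
    (horth : ∀ i j, star (v i) ⬝ᵥ v j = if i = j then 1 else 0)
    (heig : ∀ i, ρ *ᵥ v i = (p i : ℂ) • v i)
    (hp : ∀ i, 0 < p i) (hsum : ∑ i, p i = 1) :
    let D : Matrix (Fin d) (Fin d) ℂ :=
      (2 * Complex.I) • ∑ i, ∑ j,
        (((p i - p j) / (p i + p j) : ℝ) : ℂ) •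
          (star (v i) ⬝ᵥ (G *ᵥ v j)) • vecMulVec (v i) (star (v j))
    D.IsHermitian ∧
      (-Complex.I) • (G * ρ - ρ * G) = (1 / 2 : ℂ) • (ρ * D + D * ρ) ∧
      ((ρ * D * D).trace).re
        = 2 * ∑ i, ∑ j, (p i - p j) ^ 2 / (p i + p j) *
            ‖star (v i) ⬝ᵥ (G *ᵥ v j)‖ ^ 2 := by
  intro D
  set A : Fin d → Fin d → ℂ := fun i j => star (v i) ⬝ᵥ (G *ᵥ v j) with hA
  set c : Fin d → Fin d → ℝ := fun i j => (p i - p j) / (p i + p j) with hc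
  have hpp : ∀ i j : Fin d, p i + p j ≠ 0 := fun i j => ne_of_gt (add_pos (hp i) (hp j))
  have hppC : ∀ i j : Fin d, ((p i : ℂ) + (p j : ℂ)) ≠ 0 := by
    intro i j
    rw [← Complex.ofReal_add]
    exact_mod_cast hpp i j
  have hρH : ρᴴ = ρ := hρ.1
  -- A is "Hermitian"
  have herm : ∀ i j, A j i = starRingEnd ℂ (A i j) := by
    intro i j
    calc A j i = star (v j) ⬝ᵥ G *ᵥ v i := rfl
      _ = star (v j) ᵥ* G ⬝ᵥ v i := dotProduct_mulVec _ _ _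
      _ = star (v j) ᵥ* Gᴴ ⬝ᵥ v i := by rw [hG.eq]
      _ = star (G *ᵥ v j) ⬝ᵥ v i := by rw [← star_mulVec]
      _ = star (star (v i) ⬝ᵥ (G *ᵥ v j)) := star_dotProduct _ _
      _ = starRingEnd ℂ (A i j) := rfl
  -- c is antisymmetric
  have hcanti : ∀ i j, c j i = -(c i j) := by
    intro i j
    rw [hc]
    simp only
    rw [add_comm (p j) (p i)]
    ring
  have hone : ∑ i, vecMulVec (v i) (star (v i)) = 1 := SLDAux.complete v horth
  have hρl : ∀ (i : Fin d) (b : Fin d → ℂ),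
      ρ * vecMulVec (v i) b = (p i : ℂ) • vecMulVec (v i) b := by
    intro i b
    rw [SLDAux.mul_vv, heig, SLDAux.smul_vv]
  have hvρ : ∀ j, star (v j) ᵥ* ρ = (p j : ℂ) • star (v j) := by
    intro j
    rw [← hρH, ← star_mulVec, heig, star_smul]
    simp
  have hρr : ∀ (a : Fin d → ℂ) (j : Fin d),
      vecMulVec a (star (v j)) * ρ = (p j : ℂ) • vecMulVec a (star (v j)) := by
    intro a j
    rw [SLDAux.vv_mul, hvρ, SLDAux.vv_smul]
  have hGeq : G = ∑ i, ∑ j, A i j • vecMulVec (v i) (star (v j)) := by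
    have hterm : ∀ i j, vecMulVec (v i) (star (v i)) * G * vecMulVec (v j) (star (v j))
        = A i j • vecMulVec (v i) (star (v j)) := by
      intro i j
      rw [SLDAux.vv_mul, SLDAux.vv_mul_vv]
      congr 1
      rw [hA]
      exact (Matrix.dotProduct_mulVec _ _ _).symm
    calc G = 1 * G * 1 := by simp
      _ = (∑ i, vecMulVec (v i) (star (v i))) * G * (∑ j, vecMulVec (v j) (star (v j))) := by
          rw [hone]
      _ = ∑ i, ∑ j, vecMulVec (v i) (star (v i)) * G * vecMulVec (v j) (star (v j)) := by
          simp only [Finset.sum_mul, Finset.mul_sum]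
          rw [Finset.sum_comm]
      _ = ∑ i, ∑ j, A i j • vecMulVec (v i) (star (v j)) :=
          Finset.sum_congr rfl fun i _ => Finset.sum_congr rfl fun j _ => hterm i j
  have hD : D = (2 * Complex.I) •
      ∑ i, ∑ j, ((c i j : ℝ) : ℂ) • A i j • vecMulVec (v i) (star (v j)) := rfl
  -- part (a)
  have ha : D.IsHermitian := by
    have hS : (∑ i, ∑ j, ((c i j : ℝ) : ℂ) • A i j • vecMulVec (v i) (star (v j)))ᴴ
        = -(∑ i, ∑ j, ((c i j : ℝ) : ℂ) • A i j • vecMulVec (v i) (star (v j))) := by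
      calc (∑ i, ∑ j, ((c i j : ℝ) : ℂ) • A i j • vecMulVec (v i) (star (v j)))ᴴ
          = ∑ i, ∑ j, ((c i j : ℝ) : ℂ) • A j i • vecMulVec (v j) (star (v i)) := by
            simp only [Matrix.conjTranspose_sum, Matrix.conjTranspose_smul,
              SLDAux.conjTranspose_vv, star_star]
            refine Finset.sum_congr rfl fun i _ => Finset.sum_congr rfl fun j _ => ?_
            simp only [Complex.star_def, Complex.conj_ofReal]
            rw [← herm i j]
        _ = ∑ j, ∑ i, ((c i j : ℝ) : ℂ) • A j i • vecMulVec (v j) (star (v i)) :=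
            Finset.sum_comm
        _ = ∑ i, ∑ j, ((c j i : ℝ) : ℂ) • A i j • vecMulVec (v i) (star (v j)) := rfl
        _ = -(∑ i, ∑ j, ((c i j : ℝ) : ℂ) • A i j • vecMulVec (v i) (star (v j))) := by
            rw [← Finset.sum_neg_distrib]
            refine Finset.sum_congr rfl fun i _ => ?_
            rw [← Finset.sum_neg_distrib]
            refine Finset.sum_congr rfl fun j _ => ?_
            rw [hcanti i j]
            push_cast
            rw [neg_smul]
    show Dᴴ = D
    rw [hD, Matrix.conjTranspose_smul, hS]
    have hst : star (2 * Complex.I) = -(2 * Complex.I) := by simp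
    rw [hst, neg_smul, smul_neg, neg_neg]
  -- products with ρ
  have hGρ : G * ρ = ∑ i, ∑ j, (A i j * (p j : ℂ)) • vecMulVec (v i) (star (v j)) := by
    conv_lhs => rw [hGeq]
    rw [Finset.sum_mul]
    refine Finset.sum_congr rfl fun i _ => ?_
    rw [Finset.sum_mul]
    refine Finset.sum_congr rfl fun j _ => ?_
    rw [Matrix.smul_mul, hρr, smul_smul]
  have hρG : ρ * G = ∑ i, ∑ j, ((p i : ℂ) * A i j) • vecMulVec (v i) (star (v j)) := by
    conv_lhs => rw [hGeq]
    rw [Finset.mul_sum]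
    refine Finset.sum_congr rfl fun i _ => ?_
    rw [Finset.mul_sum]
    refine Finset.sum_congr rfl fun j _ => ?_
    rw [Matrix.mul_smul, hρl, smul_smul, mul_comm (A i j)]
  have hρD : ρ * D = (2 * Complex.I) •
      ∑ i, ∑ j, (((c i j : ℝ) : ℂ) * A i j * (p i : ℂ)) • vecMulVec (v i) (star (v j)) := by
    rw [hD, Matrix.mul_smul]
    congr 1
    rw [Finset.mul_sum]
    refine Finset.sum_congr rfl fun i _ => ?_
    rw [Finset.mul_sum]
    refine Finset.sum_congr rfl fun j _ => ?_
    rw [Matrix.mul_smul, Matrix.mul_smul, hρl, smul_smul, smul_smul, mul_assoc]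
  have hDρ : D * ρ = (2 * Complex.I) •
      ∑ i, ∑ j, (((c i j : ℝ) : ℂ) * A i j * (p j : ℂ)) • vecMulVec (v i) (star (v j)) := by
    rw [hD, Matrix.smul_mul]
    congr 1
    rw [Finset.sum_mul]
    refine Finset.sum_congr rfl fun i _ => ?_
    rw [Finset.sum_mul]
    refine Finset.sum_congr rfl fun j _ => ?_
    rw [Matrix.smul_mul, Matrix.smul_mul, hρr, smul_smul, smul_smul, mul_assoc]
  -- key scalar identity
  have hkey : ∀ i j : Fin d, ((c i j : ℝ) : ℂ) * ((p i : ℂ) + (p j : ℂ)) = (p i : ℂ) - (p j : ℂ) := by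
    intro i j
    simp only [hc]
    push_cast
    rw [div_mul_cancel₀ _ (hppC i j)]
  -- part (b)
  have hb : (-Complex.I) • (G * ρ - ρ * G) = (1 / 2 : ℂ) • (ρ * D + D * ρ) := by
    have hL : (-Complex.I) • (G * ρ - ρ * G)
        = ∑ i, ∑ j, (Complex.I * ((p i : ℂ) - (p j : ℂ)) * A i j) • vecMulVec (v i) (star (v j)) := by
      rw [hGρ, hρG, ← Finset.sum_sub_distrib, Finset.smul_sum]
      refine Finset.sum_congr rfl fun i _ => ?_
      rw [← Finset.sum_sub_distrib, Finset.smul_sum]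
      refine Finset.sum_congr rfl fun j _ => ?_
      rw [← sub_smul, smul_smul]
      congr 1
      ring
    have hR : (1 / 2 : ℂ) • (ρ * D + D * ρ)
        = ∑ i, ∑ j, (Complex.I * ((p i : ℂ) - (p j : ℂ)) * A i j) • vecMulVec (v i) (star (v j)) := by
      rw [hρD, hDρ, smul_add, smul_smul, smul_smul, Finset.smul_sum, Finset.smul_sum,
        ← Finset.sum_add_distrib]
      refine Finset.sum_congr rfl fun i _ => ?_
      rw [Finset.smul_sum, Finset.smul_sum, ← Finset.sum_add_distrib]
      refine Finset.sum_congr rfl fun j _ => ?_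
      rw [smul_smul, smul_smul, ← add_smul]
      congr 1
      linear_combination Complex.I * A i j * (hkey i j)
    rw [hL, hR]
  refine ⟨ha, hb, ?_⟩
  -- part (c)
  have e3 : ∀ i j : Fin d, A i j * starRingEnd ℂ (A i j) = ((‖A i j‖ : ℝ) : ℂ) ^ 2 := by
    intro i j
    rw [Complex.mul_conj]
    norm_cast
    exact (Complex.sq_norm _).symm
  have htrval : (ρ * D * D).trace = ((2 * Complex.I) * (2 * Complex.I)) *
      ∑ i, ∑ j, (((c i j : ℝ) : ℂ) * A i j) * (((c j i : ℝ) : ℂ) * A j i * (p j : ℂ)) := by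
    rw [hρD, hD, Matrix.smul_mul, Matrix.mul_smul, smul_smul, Matrix.trace_smul, smul_eq_mul]
    congr 1
    simp only [Finset.sum_mul, Finset.mul_sum, Matrix.smul_mul, Matrix.mul_smul,
      SLDAux.vv_mul_vv, Matrix.trace_sum, Matrix.trace_smul, SLDAux.trace_vv, horth,
      smul_eq_mul, mul_ite, ite_mul, mul_one, mul_zero, zero_mul, one_mul,
      Finset.sum_ite_eq, Finset.sum_ite_eq', Finset.mem_univ, if_true]
    refine Finset.sum_congr rfl fun i _ => Finset.sum_congr rfl fun j _ => ?_
    rw [Finset.sum_eq_single j]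
    · rw [Finset.sum_eq_single i]
      · simp
        ring
      · intro b _ hb
        simp [hb]
      · intro h
        exact absurd (Finset.mem_univ i) h
    · intro b _ hb
      simp [Ne.symm hb]
    · intro h
      exact absurd (Finset.mem_univ j) h
  have hreal : (ρ * D * D).trace
      = ((∑ i, ∑ j, 4 * (p j * (c i j) ^ 2 * ‖A i j‖ ^ 2) : ℝ) : ℂ) := by
    rw [htrval]
    push_cast
    rw [Finset.mul_sum]
    refine Finset.sum_congr rfl fun i _ => ?_
    rw [Finset.mul_sum]
    refine Finset.sum_congr rfl fun j _ => ?_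
    rw [herm i j, hcanti i j]
    push_cast
    linear_combination (-4 * ((p j : ℂ)) * ((c i j : ℝ) : ℂ) ^ 2 * (A i j) * (starRingEnd ℂ (A i j))) * Complex.I_mul_I
      + (4 * ((p j : ℂ)) * ((c i j : ℝ) : ℂ) ^ 2) * e3 i j
  have hre : ((ρ * D * D).trace).re = ∑ i, ∑ j, 4 * (p j * (c i j) ^ 2 * ‖A i j‖ ^ 2) := by
    rw [hreal, Complex.ofReal_re]
  rw [hre]
  have habs : ∀ i j : Fin d, ‖A j i‖ = ‖A i j‖ := by
    intro i j
    rw [herm i j]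
    exact Complex.norm_conj _
  have hsym : ∑ i, ∑ j, p j * (c i j) ^ 2 * ‖A i j‖ ^ 2
      = ∑ i, ∑ j, p i * (c i j) ^ 2 * ‖A i j‖ ^ 2 := by
    rw [Finset.sum_comm]
    refine Finset.sum_congr rfl fun i _ => Finset.sum_congr rfl fun j _ => ?_
    rw [hcanti i j, habs i j]
    ring
  calc ∑ i, ∑ j, 4 * (p j * (c i j) ^ 2 * ‖A i j‖ ^ 2)
      = 4 * ∑ i, ∑ j, p j * (c i j) ^ 2 * ‖A i j‖ ^ 2 := by
        rw [Finset.mul_sum]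
        exact Finset.sum_congr rfl fun i _ => by rw [Finset.mul_sum]
    _ = 4 * ∑ i, ∑ j, p i * (c i j) ^ 2 * ‖A i j‖ ^ 2 := by rw [hsym]
    _ = 2 * ∑ i, ∑ j, (p i + p j) * (c i j) ^ 2 * ‖A i j‖ ^ 2 := by
        have e : ∀ i j : Fin d, (p i + p j) * (c i j) ^ 2 * ‖A i j‖ ^ 2
            = p i * (c i j) ^ 2 * ‖A i j‖ ^ 2
              + p j * (c i j) ^ 2 * ‖A i j‖ ^ 2 := fun i j => by ring
        simp only [e, Finset.sum_add_distrib]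
        rw [hsym]
        ring
    _ = 2 * ∑ i, ∑ j, (p i - p j) ^ 2 / (p i + p j) * ‖A i j‖ ^ 2 := by
        congr 1
        refine Finset.sum_congr rfl fun i _ => Finset.sum_congr rfl fun j _ => ?_
        have h0 := hpp i j
        simp only [hc]
        field_simp
end

section
/- Let d ≥ 1, let ρ be a d×d complex density matrix with orthonormal eigenbasis (v_i) and eigenvalues (p_i) (p_i ≥ 0, Σ p_i = 1), and let G be a Hermitian d×d matrix. Then the quantum Fisher information is bounded by four times the variance: 2 Σ_{i,j : p_i+p_j>0} ((p_i − p_j)²/(p_i + p_j)) |⟨v_i, G v_j⟩|² ≤ 4( Re Tr(ρ·G·G) − (Re Tr(ρ·G))² ). -/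
open Matrix
open scoped ComplexOrder

/-- The quantum Fisher information of a density matrix `ρ` (with orthonormal
eigenbasis `v` and eigenvalues `p`) for a unitary encoding with Hermitian
generator `G` is bounded by four times the variance of `G` in the state `ρ`:
`I_Q(ρ, G) ≤ 4(Tr(ρG²) - (Tr(ρG))²)`. -/
theorem qfi_le_four_mul_variance
    {d : ℕ} (hd : 1 ≤ d)
    (ρ G : Matrix (Fin d) (Fin d) ℂ)
    (hρ : ρ.PosSemidef) (htr : ρ.trace = 1) (hG : G.IsHermitian)
    (v : Fin d → Fin d → ℂ) (p : Fin d → ℝ)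
    (horth : ∀ i j, star (v i) ⬝ᵥ v j = if i = j then 1 else 0)
    (heig : ∀ i, ρ *ᵥ v i = (p i : ℂ) • v i)
    (hp : ∀ i, 0 ≤ p i) (hsum : ∑ i, p i = 1) :
    2 * ∑ i, ∑ j, (if 0 < p i + p j then
        (p i - p j) ^ 2 / (p i + p j) *
          ‖star (v i) ⬝ᵥ (G *ᵥ v j)‖ ^ 2 else 0)
      ≤ 4 * (((ρ * G * G).trace).re - (((ρ * G).trace).re) ^ 2) := by
  classical
  set V : Matrix (Fin d) (Fin d) ℂ := Matrix.of (fun k i => v i k) with hV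
  have hVconj : Vᴴ * V = 1 := by
    ext i j
    simpa [Matrix.mul_apply, Matrix.conjTranspose_apply, dotProduct,
      Matrix.one_apply, hV] using horth i j
  have hVV : V * Vᴴ = 1 := mul_eq_one_comm.mp hVconj
  have hρV : ρ * V = V * Matrix.diagonal (fun i => (p i : ℂ)) := by
    ext k i
    have h := congrFun (heig i) k
    simp only [Matrix.mulVec, dotProduct, Pi.smul_apply, smul_eq_mul] at h
    simp [Matrix.mul_apply, Matrix.diagonal, hV, h, mul_comm]
  have hρ' : ρ = V * Matrix.diagonal (fun i => (p i : ℂ)) * Vᴴ := by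
    calc ρ = ρ * (V * Vᴴ) := by rw [hVV, mul_one]
    _ = (ρ * V) * Vᴴ := by rw [mul_assoc]
    _ = _ := by rw [hρV]
  set M := Vᴴ * G * V with hM
  have hMherm : Mᴴ = M := by
    simp [hM, Matrix.conjTranspose_mul, hG.eq, mul_assoc]
  have hMc : ∀ i j, M j i = (starRingEnd ℂ) (M i j) := by
    intro i j
    conv_lhs => rw [← hMherm]
    simp [Matrix.conjTranspose_apply]
  have hMentry : ∀ i j, M i j = star (v i) ⬝ᵥ (G *ᵥ v j) := by
    intro i j
    simp only [hM, Matrix.mul_apply, Matrix.mulVec, dotProduct,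
      Matrix.conjTranspose_apply, hV, Matrix.of_apply, Pi.star_apply,
      Finset.sum_mul, Finset.mul_sum]
    rw [Finset.sum_comm]
    apply Finset.sum_congr rfl; intro l _
    apply Finset.sum_congr rfl; intro k _
    ring
  -- trace formulas
  set D := Matrix.diagonal (fun i => (p i : ℂ)) with hD
  have htr1 : (ρ * G).trace = ∑ i, (p i : ℂ) * M i i := by
    have e1 : ρ * G = (V * D) * (Vᴴ * G) := by rw [hρ', mul_assoc]
    have e2 : (Vᴴ * G) * (V * D) = M * D := by rw [← mul_assoc, hM]
    rw [e1, Matrix.trace_mul_comm, e2, Matrix.trace]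
    simp only [Matrix.diag, Matrix.mul_diagonal, hD]
    apply Finset.sum_congr rfl; intro i _
    ring
  have htr2 : (ρ * G * G).trace = ∑ i, ∑ j, (p i : ℂ) * (M i j * M j i) := by
    have hMM : M * M = Vᴴ * (G * G) * V := by
      have e : Vᴴ * G * V * (Vᴴ * G * V) = Vᴴ * G * (V * Vᴴ) * (G * V) := by
        simp only [mul_assoc]
      rw [hM, e, hVV, mul_one]
      simp only [mul_assoc]
    have e1 : ρ * G * G = (V * D) * (Vᴴ * (G * G)) := by
      rw [hρ']; simp only [mul_assoc]
    have e2 : (Vᴴ * (G * G)) * (V * D) = (M * M) * D := by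
      rw [← mul_assoc, ← hMM]
    rw [e1, Matrix.trace_mul_comm, e2, Matrix.trace]
    simp only [Matrix.diag_apply, Matrix.mul_diagonal, hD, Matrix.diagonal_apply_eq]
    apply Finset.sum_congr rfl; intro i _
    rw [Matrix.mul_apply, Finset.sum_mul]
    apply Finset.sum_congr rfl; intro j _
    ring
  set a : Fin d → Fin d → ℝ := fun i j => ‖M i j‖ ^ 2 with ha
  set g : Fin d → ℝ := fun i => (M i i).re with hg
  have hMiire : ∀ i, M i i = (g i : ℂ) := by
    intro i
    have := hMc i i
    exact (Complex.conj_eq_iff_re.mp this.symm).symm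
  have haii : ∀ i, a i i = g i ^ 2 := by
    intro i
    simp [ha, hMiire i, sq_abs, Complex.normSq_ofReal, ← Complex.sq_norm]
  have hasymm : ∀ i j, a i j = a j i := by
    intro i j; simp [ha, hMc i j]
  have hMijji : ∀ i j, M i j * M j i = ((a i j : ℝ) : ℂ) := by
    intro i j
    rw [hMc i j, Complex.mul_conj, ha]
    simp [Complex.sq_norm]
  -- real parts
  have hre1 : ((ρ * G).trace).re = ∑ i, p i * g i := by
    rw [htr1]
    rw [Complex.re_sum]
    apply Finset.sum_congr rfl; intro i _
    rw [hMiire i]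
    simp [← Complex.ofReal_mul]
  have hre2 : ((ρ * G * G).trace).re = ∑ i, ∑ j, p i * a i j := by
    rw [htr2, Complex.re_sum]
    apply Finset.sum_congr rfl; intro i _
    rw [Complex.re_sum]
    apply Finset.sum_congr rfl; intro j _
    rw [hMijji i j]
    simp [← Complex.ofReal_mul]
  rw [hre1, hre2]
  -- rewrite LHS using a
  have hLHS : ∀ i j, (if 0 < p i + p j then
      (p i - p j) ^ 2 / (p i + p j) *
        ‖star (v i) ⬝ᵥ (G *ᵥ v j)‖ ^ 2 else 0)
      = (if 0 < p i + p j then (p i - p j) ^ 2 / (p i + p j) * a i j else 0) := by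
    intro i j
    simp [ha, hMentry i j]
  simp only [hLHS]
  -- Cauchy-Schwarz: (∑ p g)^2 ≤ ∑ p * a i i
  have hCS : (∑ i, p i * g i) ^ 2 ≤ ∑ i, p i * a i i := by
    have h2 := Finset.sum_mul_sq_le_sq_mul_sq Finset.univ
      (fun i => Real.sqrt (p i)) (fun i => Real.sqrt (p i) * g i)
    have e1 : ∀ i : Fin d, Real.sqrt (p i) * (Real.sqrt (p i) * g i) = p i * g i := by
      intro i; rw [← mul_assoc, Real.mul_self_sqrt (hp i)]
    have e2 : ∀ i : Fin d, Real.sqrt (p i) ^ 2 = p i := fun i => Real.sq_sqrt (hp i)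
    have e3 : ∀ i : Fin d, (Real.sqrt (p i) * g i) ^ 2 = p i * g i ^ 2 := by
      intro i; rw [mul_pow, e2]
    simp only [e1, e2, e3, hsum, one_mul] at h2
    calc (∑ i, p i * g i) ^ 2 ≤ ∑ i, p i * g i ^ 2 := h2
    _ = ∑ i, p i * a i i := by
        apply Finset.sum_congr rfl; intro i _; rw [haii i]
  -- termwise bound
  have hterm : ∀ i j, (if 0 < p i + p j then (p i - p j) ^ 2 / (p i + p j) * a i j else 0)
      ≤ (if i = j then 0 else (p i + p j) * a i j) := by
    intro i j
    have hanneg : 0 ≤ a i j := by positivity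
    by_cases hij : i = j
    · subst hij
      simp
    · rw [if_neg hij]
      split
      · rename_i hpos
        have h1 : (p i - p j) ^ 2 ≤ (p i + p j) ^ 2 := by
          have := hp i; have := hp j
          nlinarith
        have h2 : (p i - p j) ^ 2 / (p i + p j) ≤ p i + p j := by
          rw [div_le_iff₀ hpos]
          nlinarith
        exact mul_le_mul_of_nonneg_right h2 hanneg
      · exact mul_nonneg (by linarith [hp i, hp j]) hanneg
  have hsum_le : ∑ i, ∑ j, (if 0 < p i + p j then (p i - p j) ^ 2 / (p i + p j) * a i j else 0)
      ≤ ∑ i, ∑ j, (if i = j then 0 else (p i + p j) * a i j) :=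
    Finset.sum_le_sum (fun i _ => Finset.sum_le_sum (fun j _ => hterm i j))
  -- evaluate the RHS sum
  have hsplit : ∀ (f : Fin d → Fin d → ℝ) i,
      ∑ j, (if i = j then 0 else f i j) = (∑ j, f i j) - f i i := by
    intro f i
    have : ∀ j, (if i = j then 0 else f i j)
        = f i j - (if i = j then f i j else 0) := by
      intro j; split <;> simp
    simp only [this, Finset.sum_sub_distrib, Finset.sum_ite_eq, Finset.mem_univ,
      if_pos]
  have hswap : ∑ i, ∑ j, p j * a i j = ∑ i, ∑ j, p i * a i j := by
    rw [Finset.sum_comm]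
    apply Finset.sum_congr rfl; intro i _
    apply Finset.sum_congr rfl; intro j _
    rw [hasymm]
  have hval : ∑ i, ∑ j, (if i = j then 0 else (p i + p j) * a i j)
      = 2 * ((∑ i, ∑ j, p i * a i j) - ∑ i, p i * a i i) := by
    have : ∀ i, ∑ j, (if i = j then 0 else (p i + p j) * a i j)
        = (∑ j, (p i + p j) * a i j) - (p i + p i) * a i i :=
      fun i => hsplit (fun i j => (p i + p j) * a i j) i
    simp only [this, Finset.sum_sub_distrib]
    have e : ∑ i, ∑ j, (p i + p j) * a i j
        = (∑ i, ∑ j, p i * a i j) + ∑ i, ∑ j, p j * a i j := by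
      rw [← Finset.sum_add_distrib]
      apply Finset.sum_congr rfl; intro i _
      rw [← Finset.sum_add_distrib]
      apply Finset.sum_congr rfl; intro j _
      ring
    have e4 : ∑ i, (p i + p i) * a i i = 2 * ∑ i, p i * a i i := by
      rw [Finset.mul_sum]
      exact Finset.sum_congr rfl fun i _ => by ring
    rw [e, hswap]
    linarith [e4]
  calc 2 * ∑ i, ∑ j, (if 0 < p i + p j then (p i - p j) ^ 2 / (p i + p j) * a i j else 0)
      ≤ 2 * ∑ i, ∑ j, (if i = j then 0 else (p i + p j) * a i j) := by linarith
  _ = 4 * ((∑ i, ∑ j, p i * a i j) - ∑ i, p i * a i i) := by rw [hval]; ring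
  _ ≤ 4 * ((∑ i, ∑ j, p i * a i j) - (∑ i, p i * g i) ^ 2) := by linarith
end

section
/- Let d ≥ 1 and m ≥ 1, let ρ_1, …, ρ_m be positive definite d×d complex density matrices, q_1, …, q_m nonnegative reals with Σ q_k = 1 and each q_k > 0, and G a Hermitian d×d matrix. Set ρ := Σ_k q_k ρ_k (which is positive definite). Let D be the unique Hermitian solution of −i(Gρ − ρG) = (ρD + Dρ)/2 and, for each k, let D_k be the unique Hermitian solution of −i(Gρ_k − ρ_kG) = (ρ_kD_k + D_kρ_k)/2. Then the quantum Fisher information is convex: Re Tr(ρ·D·D) ≤ Σ_k q_k · Re Tr(ρ_k·D_k·D_k). -/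
open Matrix
open scoped ComplexOrder

lemma trace_re_nonneg' {n : Type*} [Fintype n] {M : Matrix n n ℂ}
    (hM : M.PosSemidef) : 0 ≤ M.trace.re := by
  have h : ∀ i, 0 ≤ M i i := fun i => by
    classical
    exact hM.diag_nonneg
  have : (0:ℝ) ≤ ∑ i, (M i i).re :=
    Finset.sum_nonneg fun i _ => (Complex.le_def.mp (h i)).1
  simpa [Matrix.trace, Matrix.diag, Complex.re_sum] using this


/-- Convexity of the quantum Fisher information: for a mixture
`ρ = Σ_k q_k ρ_k` of positive definite density matrices, with `D` (resp. `D_k`)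
the Hermitian symmetric logarithmic derivative of `ρ` (resp. `ρ_k`) for the
unitary encoding generated by the Hermitian `G`, one has
`Tr(ρ D²) ≤ Σ_k q_k Tr(ρ_k D_k²)`. -/
theorem qfi_convex
    {d m : ℕ} (hd : 1 ≤ d) (hm : 1 ≤ m)
    (ρs : Fin m → Matrix (Fin d) (Fin d) ℂ) (q : Fin m → ℝ)
    (hρs : ∀ k, (ρs k).PosDef ∧ (ρs k).trace = 1)
    (hq : ∀ k, 0 < q k) (hqsum : ∑ k, q k = 1)
    (G : Matrix (Fin d) (Fin d) ℂ) (hG : G.IsHermitian)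
    (D : Matrix (Fin d) (Fin d) ℂ) (hD : D.IsHermitian)
    (Ds : Fin m → Matrix (Fin d) (Fin d) ℂ) (hDs : ∀ k, (Ds k).IsHermitian)
    (hSLD : (-Complex.I) • (G * (∑ k, (q k : ℂ) • ρs k)
          - (∑ k, (q k : ℂ) • ρs k) * G)
        = (1 / 2 : ℂ) • ((∑ k, (q k : ℂ) • ρs k) * D
          + D * (∑ k, (q k : ℂ) • ρs k)))
    (hSLDs : ∀ k, (-Complex.I) • (G * ρs k - ρs k * G)
        = (1 / 2 : ℂ) • (ρs k * Ds k + Ds k * ρs k)) :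
    (((∑ k, (q k : ℂ) • ρs k) * D * D).trace).re
      ≤ ∑ k, q k * ((ρs k * Ds k * Ds k).trace).re := by
  set ρ : Matrix (Fin d) (Fin d) ℂ := ∑ k, (q k : ℂ) • ρs k with hρ
  -- combined matrix identity
  have hcomb : (1 / 2 : ℂ) • (ρ * D + D * ρ)
      = ∑ k, (q k : ℂ) • ((1 / 2 : ℂ) • (ρs k * Ds k + Ds k * ρs k)) := by
    rw [← hSLD]
    have : (-Complex.I) • (G * ρ - ρ * G)
        = ∑ k, (q k : ℂ) • ((-Complex.I) • (G * ρs k - ρs k * G)) := by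
      rw [hρ, Finset.mul_sum, Finset.sum_mul, ← Finset.sum_sub_distrib,
        Finset.smul_sum]
      refine Finset.sum_congr rfl fun k _ => ?_
      rw [mul_smul_comm, smul_mul_assoc, ← smul_sub, smul_comm]
    rw [this]
    exact Finset.sum_congr rfl fun k _ => by rw [hSLDs k]
  -- key trace identity
  have h1 : (ρ * D * D).trace
      = ∑ k, (q k : ℂ) * ((1 / 2 : ℂ)
          * ((ρs k * Ds k * D).trace + (ρs k * D * Ds k).trace)) := by
    have := congrArg (fun M => (M * D).trace) hcomb
    simp only [Matrix.smul_mul, Matrix.add_mul, Finset.sum_mul, trace_smul,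
      trace_add, trace_sum, smul_eq_mul] at this
    have cyc : (D * ρ * D).trace = (ρ * D * D).trace := by
      rw [trace_mul_cycle, trace_mul_cycle]
    have cyc2 : ∀ k, (Ds k * ρs k * D).trace = (ρs k * D * Ds k).trace := by
      intro k; rw [trace_mul_cycle, trace_mul_cycle]
    rw [cyc] at this
    simp only [cyc2] at this
    rw [← this]; ring
  -- per-k inequality
  have hk : ∀ k, ((ρs k * Ds k * D).trace + (ρs k * D * Ds k).trace).re
      ≤ ((ρs k * Ds k * Ds k).trace).re + ((ρs k * D * D).trace).re := by
    intro k
    set A := Ds k - D with hA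
    have hAh : Aᴴ = A := by
      rw [hA, conjTranspose_sub, (hDs k).eq, hD.eq]
    have hpos : (0:ℝ) ≤ ((ρs k * A * A).trace).re := by
      have h3 : (ρs k * A * A).trace = (A * ρs k * Aᴴ).trace := by
        rw [hAh, trace_mul_cycle]
      rw [h3]
      exact trace_re_nonneg' ((hρs k).1.posSemidef.mul_mul_conjTranspose_same A)
    have hexp : (ρs k * A * A).trace
        = (ρs k * Ds k * Ds k).trace - (ρs k * Ds k * D).trace
          - (ρs k * D * Ds k).trace + (ρs k * D * D).trace := by
      rw [hA]
      simp only [Matrix.mul_sub, Matrix.sub_mul, trace_sub]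
      ring
    rw [hexp] at hpos
    simp only [Complex.sub_re, Complex.add_re] at hpos ⊢
    linarith
  -- linearity identity for ∑ q_k Tr(ρ_k D D)
  have h2 : (ρ * D * D).trace = ∑ k, (q k : ℂ) * (ρs k * D * D).trace := by
    rw [hρ, Finset.sum_mul, Finset.sum_mul, trace_sum]
    exact Finset.sum_congr rfl fun k _ => by
      rw [Matrix.smul_mul, Matrix.smul_mul, trace_smul, smul_eq_mul]
  -- pass to real parts
  have h1r : ((ρ * D * D).trace).re
      = ∑ k, q k * (1/2) * ((ρs k * Ds k * D).trace + (ρs k * D * Ds k).trace).re := by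
    rw [h1, Complex.re_sum]
    refine Finset.sum_congr rfl fun k _ => ?_
    have : ((q k : ℂ) * ((1/2 : ℂ) * ((ρs k * Ds k * D).trace + (ρs k * D * Ds k).trace)))
        = (((q k * (1/2) : ℝ)) : ℂ) * ((ρs k * Ds k * D).trace + (ρs k * D * Ds k).trace) := by
      push_cast; ring
    rw [this, Complex.re_ofReal_mul]
  have h2r : ((ρ * D * D).trace).re = ∑ k, q k * ((ρs k * D * D).trace).re := by
    rw [h2, Complex.re_sum]
    exact Finset.sum_congr rfl fun k _ => Complex.re_ofReal_mul _ _
  -- combine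
  have hsum : ((ρ * D * D).trace).re
      ≤ ∑ k, q k * (1/2) * (((ρs k * Ds k * Ds k).trace).re + ((ρs k * D * D).trace).re) := by
    rw [h1r]
    refine Finset.sum_le_sum fun k _ => ?_
    have := hk k
    have hqk := (hq k).le
    nlinarith [hk k, (hq k).le]
  have hfinal : ∑ k, q k * (1/2) * (((ρs k * Ds k * Ds k).trace).re + ((ρs k * D * D).trace).re)
      = (1/2) * (∑ k, q k * ((ρs k * Ds k * Ds k).trace).re) + (1/2) * ((ρ * D * D).trace).re := by
    rw [h2r, Finset.mul_sum, Finset.mul_sum, ← Finset.sum_add_distrib]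
    exact Finset.sum_congr rfl fun k _ => by ring
  rw [hfinal] at hsum
  linarith
end

section
/- Let d₁, d₂ ≥ 1, let ρ be a positive definite d₁×d₁ complex density matrix and σ a positive definite d₂×d₂ complex density matrix, and let G (d₁×d₁) and H (d₂×d₂) be Hermitian. Let D_ρ be the unique Hermitian solution of −i(Gρ − ρG) = (ρD_ρ + D_ρρ)/2 and D_σ the unique Hermitian solution of −i(Hσ − σH) = (σD_σ + D_σσ)/2. Then: (a) D := D_ρ ⊗ 1 + 1 ⊗ D_σ (Kronecker products with identities) is the unique Hermitian solution of the symmetric logarithmic derivative equation for the state ρ ⊗ σ with generator G ⊗ 1 + 1 ⊗ H; and (b) the quantum Fisher information is additive: Re Tr((ρ⊗σ)·D·D) = Re Tr(ρ·D_ρ·D_ρ) + Re Tr(σ·D_σ·D_σ). -/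
open Matrix
open scoped ComplexOrder Kronecker

section aux

variable {l m n p : Type*}

lemma kron_conjTranspose [Fintype m] (A : Matrix l m ℂ) (B : Matrix n p ℂ) :
    (A ⊗ₖ B)ᴴ = Aᴴ ⊗ₖ Bᴴ := by
  ext ⟨i, j⟩ ⟨k, l⟩
  simp [Matrix.conjTranspose_apply, Matrix.kroneckerMap_apply, mul_comm]

lemma sub_kron (A B : Matrix l m ℂ) (C : Matrix n p ℂ) :
    (A - B) ⊗ₖ C = A ⊗ₖ C - B ⊗ₖ C := by
  ext ⟨i, j⟩ ⟨k, l⟩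
  simp [Matrix.kroneckerMap_apply, sub_mul]

lemma kron_sub (A : Matrix l m ℂ) (B C : Matrix n p ℂ) :
    A ⊗ₖ (B - C) = A ⊗ₖ B - A ⊗ₖ C := by
  ext ⟨i, j⟩ ⟨k, l⟩
  simp [Matrix.kroneckerMap_apply, mul_sub]

/-- Sylvester/Lyapunov uniqueness: if `P` is unitarily diagonalizable with positive
eigenvalues and `P*X + X*P = 0` then `X = 0`. -/
lemma sylvester_zero {n : Type*} [Fintype n] [DecidableEq n]
    (V P X : Matrix n n ℂ) (hV1 : star V * V = 1) (hV2 : V * star V = 1)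
    (d : n → ℝ) (hd : ∀ i, 0 < d i)
    (hP : star V * P * V = diagonal (fun i => (d i : ℂ)))
    (h : P * X + X * P = 0) : X = 0 := by
  set Y : Matrix n n ℂ := star V * X * V with hY
  have hPV : P * V = V * diagonal (fun i => (d i : ℂ)) := by
    calc P * V = (V * star V) * P * V := by rw [hV2, one_mul]
    _ = V * (star V * P * V) := by noncomm_ring
    _ = V * diagonal (fun i => (d i : ℂ)) := by rw [hP]
  have hVP : star V * P = diagonal (fun i => (d i : ℂ)) * star V := by
    calc star V * P = star V * P * (V * star V) := by rw [hV2, mul_one]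
    _ = (star V * P * V) * star V := by noncomm_ring
    _ = _ := by rw [hP]
  have hYeq : diagonal (fun i => (d i : ℂ)) * Y + Y * diagonal (fun i => (d i : ℂ)) = 0 := by
    have h2 := congrArg (fun M => star V * M * V) h
    simp only [add_mul, mul_add, mul_zero, zero_mul] at h2
    calc diagonal (fun i => (d i : ℂ)) * Y + Y * diagonal (fun i => (d i : ℂ))
        = (diagonal (fun i => (d i : ℂ)) * star V) * X * V
          + star V * X * (V * diagonal (fun i => (d i : ℂ))) := by
          rw [hY]; noncomm_ring
      _ = star V * (P * X) * V + star V * (X * P) * V := by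
          rw [← hVP, ← hPV]; noncomm_ring
      _ = 0 := by simpa [mul_assoc] using h2
  have hY0 : Y = 0 := by
    ext i j
    have := congrFun (congrFun hYeq i) j
    simp only [Matrix.add_apply, Matrix.diagonal_mul, Matrix.mul_diagonal,
      Matrix.zero_apply] at this
    have hne : ((d i : ℂ) + (d j : ℂ)) ≠ 0 := by
      rw [← Complex.ofReal_add]
      exact_mod_cast ne_of_gt (add_pos (hd i) (hd j))
    have : ((d i : ℂ) + (d j : ℂ)) * Y i j = 0 := by ring_nf; ring_nf at this; linear_combination this
    simpa [hne] using mul_eq_zero.mp this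
  calc X = (V * star V) * X * (V * star V) := by rw [hV2]; noncomm_ring
  _ = V * Y * star V := by rw [hY]; noncomm_ring
  _ = 0 := by rw [hY0]; simp

end aux

/-- Additivity of the quantum Fisher information for product states: for
positive definite density matrices `ρ`, `σ`, Hermitian generators `G`, `H`
with symmetric logarithmic derivatives `Dρ`, `Dσ`, the matrix
`D = Dρ ⊗ 1 + 1 ⊗ Dσ` is the unique Hermitian symmetric logarithmic derivative
of `ρ ⊗ σ` for the generator `G ⊗ 1 + 1 ⊗ H`, and
`Tr((ρ⊗σ) D²) = Tr(ρ Dρ²) + Tr(σ Dσ²)`. -/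
theorem qfi_additive_for_tensor_products
    {d₁ d₂ : ℕ} (h₁ : 1 ≤ d₁) (h₂ : 1 ≤ d₂)
    (ρ : Matrix (Fin d₁) (Fin d₁) ℂ) (σ : Matrix (Fin d₂) (Fin d₂) ℂ)
    (hρ : ρ.PosDef) (htrρ : ρ.trace = 1)
    (hσ : σ.PosDef) (htrσ : σ.trace = 1)
    (G : Matrix (Fin d₁) (Fin d₁) ℂ) (H : Matrix (Fin d₂) (Fin d₂) ℂ)
    (hG : G.IsHermitian) (hH : H.IsHermitian)
    (Dρ : Matrix (Fin d₁) (Fin d₁) ℂ) (hDρ : Dρ.IsHermitian)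
    (hSLDρ : (-Complex.I) • (G * ρ - ρ * G) = (1 / 2 : ℂ) • (ρ * Dρ + Dρ * ρ))
    (Dσ : Matrix (Fin d₂) (Fin d₂) ℂ) (hDσ : Dσ.IsHermitian)
    (hSLDσ : (-Complex.I) • (H * σ - σ * H) = (1 / 2 : ℂ) • (σ * Dσ + Dσ * σ)) :
    let K : Matrix (Fin d₁ × Fin d₂) (Fin d₁ × Fin d₂) ℂ :=
      G ⊗ₖ (1 : Matrix (Fin d₂) (Fin d₂) ℂ) + (1 : Matrix (Fin d₁) (Fin d₁) ℂ) ⊗ₖ H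
    let D : Matrix (Fin d₁ × Fin d₂) (Fin d₁ × Fin d₂) ℂ :=
      Dρ ⊗ₖ (1 : Matrix (Fin d₂) (Fin d₂) ℂ) + (1 : Matrix (Fin d₁) (Fin d₁) ℂ) ⊗ₖ Dσ
    (D.IsHermitian ∧
      (-Complex.I) • (K * (ρ ⊗ₖ σ) - (ρ ⊗ₖ σ) * K)
        = (1 / 2 : ℂ) • ((ρ ⊗ₖ σ) * D + D * (ρ ⊗ₖ σ)) ∧
      (∀ D' : Matrix (Fin d₁ × Fin d₂) (Fin d₁ × Fin d₂) ℂ, D'.IsHermitian →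
        (-Complex.I) • (K * (ρ ⊗ₖ σ) - (ρ ⊗ₖ σ) * K)
          = (1 / 2 : ℂ) • ((ρ ⊗ₖ σ) * D' + D' * (ρ ⊗ₖ σ)) → D' = D)) ∧
    (((ρ ⊗ₖ σ) * D * D).trace).re
      = ((ρ * Dρ * Dρ).trace).re + ((σ * Dσ * Dσ).trace).re := by
  intro K D
  -- the SLD equation for the product state
  have hherm : D.IsHermitian := by
    show Dᴴ = D
    simp only [D, conjTranspose_add, kron_conjTranspose, conjTranspose_one, hDρ.eq, hDσ.eq]
  have hSLD : (-Complex.I) • (K * (ρ ⊗ₖ σ) - (ρ ⊗ₖ σ) * K)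
      = (1 / 2 : ℂ) • ((ρ ⊗ₖ σ) * D + D * (ρ ⊗ₖ σ)) := by
    calc (-Complex.I) • (K * (ρ ⊗ₖ σ) - (ρ ⊗ₖ σ) * K)
        = ((-Complex.I) • (G * ρ - ρ * G)) ⊗ₖ σ
          + ρ ⊗ₖ ((-Complex.I) • (H * σ - σ * H)) := by
          simp only [K, add_mul, mul_add, ← mul_kronecker_mul, one_mul, mul_one,
            smul_kronecker, kronecker_smul, sub_kron, kron_sub]
          module
      _ = ((1 / 2 : ℂ) • (ρ * Dρ + Dρ * ρ)) ⊗ₖ σ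
          + ρ ⊗ₖ ((1 / 2 : ℂ) • (σ * Dσ + Dσ * σ)) := by rw [hSLDρ, hSLDσ]
      _ = (1 / 2 : ℂ) • ((ρ ⊗ₖ σ) * D + D * (ρ ⊗ₖ σ)) := by
          simp only [D, add_mul, mul_add, ← mul_kronecker_mul, one_mul, mul_one,
            smul_kronecker, kronecker_smul, add_kronecker, kronecker_add]
          module
  refine ⟨⟨hherm, hSLD, ?_⟩, ?_⟩
  · -- uniqueness
    intro D' _ hD'
    -- eigen-data
    set U₁ : Matrix (Fin d₁) (Fin d₁) ℂ := (hρ.1.eigenvectorUnitary : Matrix (Fin d₁) (Fin d₁) ℂ)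
    set U₂ : Matrix (Fin d₂) (Fin d₂) ℂ := (hσ.1.eigenvectorUnitary : Matrix (Fin d₂) (Fin d₂) ℂ)
    have hU₁ := hρ.1.eigenvectorUnitary.2
    have hU₂ := hσ.1.eigenvectorUnitary.2
    rw [Unitary.mem_iff] at hU₁ hU₂
    set V : Matrix (Fin d₁ × Fin d₂) (Fin d₁ × Fin d₂) ℂ := U₁ ⊗ₖ U₂
    have hV1 : star V * V = 1 := by
      show (U₁ ⊗ₖ U₂)ᴴ * (U₁ ⊗ₖ U₂) = 1
      rw [kron_conjTranspose, ← mul_kronecker_mul]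
      show (star U₁ * U₁) ⊗ₖ (star U₂ * U₂) = 1
      rw [hU₁.1, hU₂.1, one_kronecker_one]
    have hV2 : V * star V = 1 := by
      show (U₁ ⊗ₖ U₂) * (U₁ ⊗ₖ U₂)ᴴ = 1
      rw [kron_conjTranspose, ← mul_kronecker_mul]
      show (U₁ * star U₁) ⊗ₖ (U₂ * star U₂) = 1
      rw [hU₁.2, hU₂.2, one_kronecker_one]
    have hdiag : star V * (ρ ⊗ₖ σ) * V
        = diagonal (fun p : Fin d₁ × Fin d₂ =>
            ((hρ.1.eigenvalues p.1 * hσ.1.eigenvalues p.2 : ℝ) : ℂ)) := by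
      show (U₁ ⊗ₖ U₂)ᴴ * (ρ ⊗ₖ σ) * (U₁ ⊗ₖ U₂) = _
      rw [kron_conjTranspose, ← mul_kronecker_mul, ← mul_kronecker_mul]
      have e₁ : U₁ᴴ * ρ * U₁ = diagonal (RCLike.ofReal ∘ hρ.1.eigenvalues) :=
        by have h := hρ.1.conjStarAlgAut_star_eigenvectorUnitary; rw [Unitary.conjStarAlgAut_star_apply] at h; exact h
      have e₂ : U₂ᴴ * σ * U₂ = diagonal (RCLike.ofReal ∘ hσ.1.eigenvalues) :=
        by have h := hσ.1.conjStarAlgAut_star_eigenvectorUnitary; rw [Unitary.conjStarAlgAut_star_apply] at h; exact h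
      rw [e₁, e₂, diagonal_kronecker_diagonal]
      congr 1
      ext p
      push_cast
      rfl
    have hsub : (ρ ⊗ₖ σ) * (D' - D) + (D' - D) * (ρ ⊗ₖ σ) = 0 := by
      have h2 := hD'.symm.trans hSLD
      have h3 : (ρ ⊗ₖ σ) * D' + D' * (ρ ⊗ₖ σ) = (ρ ⊗ₖ σ) * D + D * (ρ ⊗ₖ σ) := by
        have := smul_right_injective (Matrix (Fin d₁ × Fin d₂) (Fin d₁ × Fin d₂) ℂ)
          (show (1 / 2 : ℂ) ≠ 0 by norm_num) h2
        exact this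
      simp only [mul_sub, sub_mul]
      rw [sub_add_sub_comm, h3, sub_self]
    have := sylvester_zero V (ρ ⊗ₖ σ) (D' - D) hV1 hV2 _
      (fun p => mul_pos (hρ.eigenvalues_pos p.1) (hσ.eigenvalues_pos p.2)) hdiag hsub
    exact sub_eq_zero.mp this
  · -- trace additivity
    have hc₁ : (ρ * Dρ).trace = 0 := by
      have h := congrArg Matrix.trace hSLDρ
      rw [trace_smul, trace_smul, trace_sub, trace_add, trace_mul_comm G ρ,
        trace_mul_comm Dρ ρ] at h
      simp only [sub_self, smul_zero, smul_eq_mul] at h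
      linear_combination -h
    have hc₂ : (σ * Dσ).trace = 0 := by
      have h := congrArg Matrix.trace hSLDσ
      rw [trace_smul, trace_smul, trace_sub, trace_add, trace_mul_comm H σ,
        trace_mul_comm Dσ σ] at h
      simp only [sub_self, smul_zero, smul_eq_mul] at h
      linear_combination -h
    have htr : ((ρ ⊗ₖ σ) * D * D).trace = (ρ * Dρ * Dρ).trace + (σ * Dσ * Dσ).trace := by
      simp only [D, add_mul, mul_add, ← mul_kronecker_mul, one_mul, mul_one, trace_add,
        trace_kronecker, htrρ, htrσ, hc₁, hc₂]
      ring
    rw [htr, Complex.add_re]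
end

section
/- Let β be a complex number, set b := |β|² and N := 2(1 + e^{−2b}), and define c : ℕ → ℂ by c(n) = 0 for odd n and c(2k) = 2 e^{−b/2} β^{2k} / (√((2k)!) · √N). Then: (a) Σ_{n=0}^∞ |c(n)|² = 1 (normalization of the even cat state); (b) the mean photon number is Σ_{n=0}^∞ n · |c(n)|² = b · tanh(b); and (c) the photon-number variance is Σ_{n=0}^∞ n² · |c(n)|² − (b·tanh b)² = b·tanh(b) + b² / cosh²(b). -/
open Real

lemma tsum_exp' (x : ℝ) : ∑' n : ℕ, x ^ n / n.factorial = Real.exp x := by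
  rw [Real.exp_eq_exp_ℝ, NormedSpace.exp_eq_tsum_div]

lemma fact_ne (n : ℕ) : ((n.factorial : ℝ)) ≠ 0 := by
  exact_mod_cast n.factorial_ne_zero

lemma step1 (x : ℝ) (n : ℕ) :
    ((n : ℝ) + 1) * x ^ (n + 1) / (n + 1).factorial = x * (x ^ n / n.factorial) := by
  rw [Nat.factorial_succ]
  have h1 := fact_ne n
  push_cast
  field_simp
  ring

lemma summable1 (x : ℝ) : Summable (fun n : ℕ => (n : ℝ) * x ^ n / n.factorial) := by
  rw [← summable_nat_add_iff 1]
  simpa [step1 x] using (Real.summable_pow_div_factorial x).mul_left x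

lemma tsum1 (x : ℝ) : ∑' n : ℕ, (n : ℝ) * x ^ n / n.factorial = x * Real.exp x := by
  rw [Summable.tsum_eq_zero_add (summable1 x)]
  push_cast
  simp only [step1 x]
  rw [tsum_mul_left, tsum_exp']
  simp

lemma step2 (x : ℝ) (n : ℕ) :
    ((n : ℝ) + 1) ^ 2 * x ^ (n + 1) / (n + 1).factorial
      = x * ((n : ℝ) * x ^ n / n.factorial + x ^ n / n.factorial) := by
  rw [Nat.factorial_succ]
  have h1 := fact_ne n
  push_cast
  field_simp
  ring

lemma summable2 (x : ℝ) : Summable (fun n : ℕ => (n : ℝ) ^ 2 * x ^ n / n.factorial) := by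
  rw [← summable_nat_add_iff 1]
  simpa [step2 x] using ((summable1 x).add (Real.summable_pow_div_factorial x)).mul_left x

lemma tsum2 (x : ℝ) :
    ∑' n : ℕ, (n : ℝ) ^ 2 * x ^ n / n.factorial = (x + x ^ 2) * Real.exp x := by
  rw [Summable.tsum_eq_zero_add (summable2 x)]
  push_cast
  simp only [step2 x]
  rw [tsum_mul_left, Summable.tsum_add (summable1 x) (Real.summable_pow_div_factorial x),
    tsum1, tsum_exp']
  simp
  ring

lemma even_tsum (h : ℕ → ℝ) (h1 : Summable h)
    (h2 : Summable fun n => (-1 : ℝ) ^ n * h n) :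
    ∑' n : ℕ, (if Even n then h n else 0)
      = (∑' n : ℕ, h n + ∑' n : ℕ, (-1 : ℝ) ^ n * h n) / 2 := by
  have key : ∀ n : ℕ, (if Even n then h n else 0) = (h n + (-1 : ℝ) ^ n * h n) / 2 := by
    intro n
    rcases Nat.even_or_odd n with he | ho
    · rw [if_pos he, he.neg_one_pow]; ring
    · rw [if_neg (Nat.not_even_iff_odd.mpr ho), ho.neg_one_pow]; ring
  rw [tsum_congr key, tsum_div_const, Summable.tsum_add h1 h2]

lemma signed0 (x : ℝ) (n : ℕ) :
    (-1 : ℝ) ^ n * (x ^ n / n.factorial) = (-x) ^ n / n.factorial := by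
  rw [neg_pow]; ring

lemma signed1 (x : ℝ) (n : ℕ) :
    (-1 : ℝ) ^ n * ((n : ℝ) * x ^ n / n.factorial) = (n : ℝ) * (-x) ^ n / n.factorial := by
  rw [neg_pow]; ring

lemma signed2 (x : ℝ) (n : ℕ) :
    (-1 : ℝ) ^ n * ((n : ℝ) ^ 2 * x ^ n / n.factorial)
      = (n : ℝ) ^ 2 * (-x) ^ n / n.factorial := by
  rw [neg_pow]; ring

lemma E0 (x : ℝ) : ∑' n : ℕ, (if Even n then x ^ n / n.factorial else 0)
    = (Real.exp x + Real.exp (-x)) / 2 := by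
  have hs : Summable fun n : ℕ => (-1 : ℝ) ^ n * (x ^ n / n.factorial) := by
    simpa [signed0] using Real.summable_pow_div_factorial (-x)
  rw [even_tsum _ (Real.summable_pow_div_factorial x) hs]
  simp only [signed0]
  rw [tsum_exp', tsum_exp']

lemma E1 (x : ℝ) : ∑' n : ℕ, (if Even n then (n : ℝ) * x ^ n / n.factorial else 0)
    = (x * Real.exp x - x * Real.exp (-x)) / 2 := by
  have hs : Summable fun n : ℕ => (-1 : ℝ) ^ n * ((n : ℝ) * x ^ n / n.factorial) := by
    simpa [signed1] using summable1 (-x)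
  rw [even_tsum _ (summable1 x) hs]
  simp only [signed1]
  rw [tsum1, tsum1]
  ring

lemma E2 (x : ℝ) : ∑' n : ℕ, (if Even n then (n : ℝ) ^ 2 * x ^ n / n.factorial else 0)
    = ((x + x ^ 2) * Real.exp x + (x ^ 2 - x) * Real.exp (-x)) / 2 := by
  have hs : Summable fun n : ℕ => (-1 : ℝ) ^ n * ((n : ℝ) ^ 2 * x ^ n / n.factorial) := by
    simpa [signed2] using summable2 (-x)
  rw [even_tsum _ (summable2 x) hs]
  simp only [signed2]
  rw [tsum2, tsum2]
  ring

/-- Photon-number statistics of the even cat state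
`(|β⟩ + |−β⟩)/√N`, `N = 2(1 + e^{−2|β|²})`: the even Fock-basis amplitudes `c`
are normalized, the mean photon number is `b tanh b` with `b = |β|²`, and the
photon-number variance is `b tanh b + b²/cosh² b`. -/
theorem even_cat_state_photon_number_moments
    (β : ℂ) (b N : ℝ)
    (hb : b = ‖β‖ ^ 2)
    (hN : N = 2 * (1 + Real.exp (-2 * b)))
    (c : ℕ → ℂ)
    (hodd : ∀ n, Odd n → c n = 0)
    (heven : ∀ k, c (2 * k) =
      ((2 * Real.exp (-b / 2) : ℝ) : ℂ) * β ^ (2 * k)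
        / (((Real.sqrt (Nat.factorial (2 * k)) : ℝ) : ℂ) * ((Real.sqrt N : ℝ) : ℂ))) :
    (∑' n : ℕ, ‖c n‖ ^ 2 = 1) ∧
    (∑' n : ℕ, (n : ℝ) * ‖c n‖ ^ 2 = b * Real.tanh b) ∧
    (∑' n : ℕ, (n : ℝ) ^ 2 * ‖c n‖ ^ 2 - (b * Real.tanh b) ^ 2
      = b * Real.tanh b + b ^ 2 / Real.cosh b ^ 2) := by
  have hNpos : 0 < N := by rw [hN]; positivity
  have hE : 0 < Real.exp b := Real.exp_pos b
  have hexpneg : Real.exp (-b) = (Real.exp b)⁻¹ := Real.exp_neg b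
  have hexp2 : Real.exp (-2 * b) = (Real.exp b)⁻¹ * (Real.exp b)⁻¹ := by
    rw [show (-2 * b) = (-b) + (-b) by ring, Real.exp_add, hexpneg]
  have hA : ∀ n : ℕ, ‖c n‖ ^ 2
      = if Even n then (4 * Real.exp (-b) / N) * (b ^ n / n.factorial) else 0 := by
    intro n
    rcases Nat.even_or_odd n with he | ho
    · obtain ⟨k, rfl⟩ := he
      rw [if_pos ⟨k, rfl⟩]
      have hc := heven k
      rw [two_mul] at hc
      rw [hc, norm_div, norm_mul, norm_mul, norm_pow, Complex.norm_real,
        Complex.norm_real, Complex.norm_real, Real.norm_eq_abs, Real.norm_eq_abs, Real.norm_eq_abs,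
        abs_of_nonneg (by positivity : (0:ℝ) ≤ 2 * Real.exp (-b/2)),
        abs_of_nonneg (Real.sqrt_nonneg _), abs_of_nonneg (Real.sqrt_nonneg _)]
      have hfpos : (0:ℝ) < (k+k).factorial := by exact_mod_cast (k+k).factorial_pos
      have hbk : (‖β‖ ^ (k+k)) ^ 2 = b ^ (k+k) := by rw [hb]; ring
      have hee : Real.exp (-b/2) ^ 2 = Real.exp (-b) := by
        rw [sq, ← Real.exp_add]; ring_nf
      rw [div_pow, mul_pow, mul_pow, mul_pow, Real.sq_sqrt hfpos.le,
        Real.sq_sqrt hNpos.le, hbk, hee]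
      field_simp
      ring
    · rw [if_neg (Nat.not_even_iff_odd.mpr ho), hodd n ho]; simp
  have pull0 : ∀ n : ℕ,
      (if Even n then (4 * Real.exp (-b) / N) * (b ^ n / n.factorial) else 0)
        = (4 * Real.exp (-b) / N) * (if Even n then b ^ n / n.factorial else 0) := by
    intro n; split <;> simp
  have hS0 : ∑' n : ℕ, ‖c n‖ ^ 2
      = (4 * Real.exp (-b) / N) * ((Real.exp b + Real.exp (-b)) / 2) := by
    rw [tsum_congr fun n => (hA n).trans (pull0 n), tsum_mul_left, E0]
  have pull1 : ∀ n : ℕ, (n : ℝ) * ‖c n‖ ^ 2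
      = (4 * Real.exp (-b) / N) * (if Even n then (n : ℝ) * b ^ n / n.factorial else 0) := by
    intro n; rw [hA n]; split
    · ring
    · simp
  have hS1 : ∑' n : ℕ, (n : ℝ) * ‖c n‖ ^ 2
      = (4 * Real.exp (-b) / N) * ((b * Real.exp b - b * Real.exp (-b)) / 2) := by
    rw [tsum_congr pull1, tsum_mul_left, E1]
  have pull2 : ∀ n : ℕ, (n : ℝ) ^ 2 * ‖c n‖ ^ 2
      = (4 * Real.exp (-b) / N)
          * (if Even n then (n : ℝ) ^ 2 * b ^ n / n.factorial else 0) := by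
    intro n; rw [hA n]; split
    · ring
    · simp
  have hS2 : ∑' n : ℕ, (n : ℝ) ^ 2 * ‖c n‖ ^ 2
      = (4 * Real.exp (-b) / N)
          * (((b + b ^ 2) * Real.exp b + (b ^ 2 - b) * Real.exp (-b)) / 2) := by
    rw [tsum_congr pull2, tsum_mul_left, E2]
  have htanh : Real.tanh b = (Real.exp b - (Real.exp b)⁻¹) / (Real.exp b + (Real.exp b)⁻¹) := by
    rw [Real.tanh_eq_sinh_div_cosh, Real.sinh_eq, Real.cosh_eq, hexpneg]
    field_simp
  have hcoshpos : 0 < Real.exp b + (Real.exp b)⁻¹ := by positivity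
  refine ⟨?_, ?_, ?_⟩
  · rw [hS0, hN, hexpneg, hexp2]
    field_simp
    ring
  · rw [hS1, hN, hexpneg, hexp2, htanh]
    field_simp
    ring
  · rw [hS2, hN, hexpneg, hexp2, htanh, Real.cosh_eq, hexpneg]
    field_simp
    ring
end
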